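/- Let (X,μ) be a probability space and g measurable with μ-mean zero and ‖g‖_∞ ≤ η ≤ 1. Then there is an absolute constant C such that | log ∫ exp(g) dμ - (1/2)∫ g² dμ | ≤ C η ∫ g² dμ. -/

import Mathlib

open MeasureTheory

lemma exp_taylor3 {t : ℝ} (ht : |t| ≤ 1) :
    |Real.exp t - (1 + t + t ^ 2 / 2)| ≤ (2 / 9) * |t| ^ 3 := by
  have h := Real.exp_bound ht (n := 3) (by norm_num)
  have hs : ∑ m ∈ Finset.range 3, t ^ m / (m.factorial : ℝ) = 1 + t + t ^ 2 / 2 := by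
    simp [Finset.sum_range_succ]
  rw [hs] at h
  calc |Real.exp t - (1 + t + t ^ 2 / 2)| ≤ |t| ^ 3 * ((3:ℕ).succ / ((3:ℕ).factorial * 3)) := h
    _ = (2 / 9) * |t| ^ 3 := by norm_num [Nat.factorial]; ring

/-- for centered g with ‖g‖_∞ ≤ η ≤ 1,
|log ∫ e^g dμ - (1/2)∫ g² dμ| ≤ C η ∫ g² dμ for an absolute constant C. -/
theorem stmt_10 {X : Type*} [MeasurableSpace X] (μ : Measure X) [IsProbabilityMeasure μ] :
    ∃ C > (0:ℝ), ∀ (g : X → ℝ) (η : ℝ), Measurable g → 0 ≤ η → η ≤ 1 →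
      (∀ x, |g x| ≤ η) → (∫ x, g x ∂μ) = 0 →
      |Real.log (∫ x, Real.exp (g x) ∂μ) - (1 / 2) * ∫ x, (g x) ^ 2 ∂μ|
        ≤ C * η * ∫ x, (g x) ^ 2 ∂μ := by
  refine ⟨2, by norm_num, ?_⟩
  intro g η hg hη0 hη1 hb hmean
  have hb1 : ∀ x, |g x| ≤ 1 := fun x => (hb x).trans hη1
  -- integrability
  have hg_int : Integrable g μ := by
    refine (integrable_const η).mono' hg.aestronglyMeasurable ?_
    exact Filter.Eventually.of_forall fun x => by simpa using hb x
  have hg2_int : Integrable (fun x => (g x) ^ 2) μ := by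
    refine (integrable_const (η ^ 2)).mono' (hg.pow_const 2).aestronglyMeasurable ?_
    refine Filter.Eventually.of_forall fun x => ?_
    have := hb x
    rw [Real.norm_eq_abs, abs_pow]
    exact pow_le_pow_left₀ (abs_nonneg _) this 2
  have hexp_int : Integrable (fun x => Real.exp (g x)) μ := by
    refine (integrable_const (Real.exp 1)).mono'
      (Real.measurable_exp.comp hg).aestronglyMeasurable ?_
    refine Filter.Eventually.of_forall fun x => ?_
    rw [Real.norm_eq_abs, abs_of_pos (Real.exp_pos _)]
    exact Real.exp_le_exp.2 ((le_abs_self _).trans (hb1 x))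
  set S : ℝ := ∫ x, (g x) ^ 2 ∂μ with hSdef
  have hS0 : 0 ≤ S := integral_nonneg fun x => sq_nonneg _
  have hSη : S ≤ η ^ 2 := by
    calc S ≤ ∫ _x, η ^ 2 ∂μ := by
          refine integral_mono hg2_int (integrable_const _) fun x => ?_
          have := hb x
          calc (g x) ^ 2 = |g x| ^ 2 := (sq_abs _).symm
            _ ≤ η ^ 2 := pow_le_pow_left₀ (abs_nonneg _) this 2
      _ = η ^ 2 := by simp
  -- remainder
  have hR_int : Integrable (fun x => Real.exp (g x) - (1 + g x + (g x) ^ 2 / 2)) μ := by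
    exact hexp_int.sub ((integrable_const 1).add hg_int |>.add (hg2_int.div_const 2))
  have hsum_int : Integrable (fun x => 1 + g x + (g x) ^ 2 / 2) μ := by
    exact ((integrable_const 1).add hg_int).add (hg2_int.div_const 2)
  set E : ℝ := ∫ x, (Real.exp (g x) - (1 + g x + (g x) ^ 2 / 2)) ∂μ with hEdef
  have hI_eq : (∫ x, Real.exp (g x) ∂μ) = 1 + S / 2 + E := by
    have h1 : E = (∫ x, Real.exp (g x) ∂μ) - ∫ x, (1 + g x + (g x) ^ 2 / 2) ∂μ := by
      rw [hEdef, integral_sub hexp_int hsum_int]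
    have hc : Integrable (fun x => 1 + g x) μ := by
      exact (integrable_const 1).add hg_int
    have h2 : (∫ x, (1 + g x + (g x) ^ 2 / 2) ∂μ) = 1 + 0 + S / 2 := by
      rw [integral_add hc (hg2_int.div_const 2),
        integral_add (integrable_const 1) hg_int, integral_div, hmean]
      simp [hSdef]
    rw [h2] at h1
    linarith
  have hE : |E| ≤ (2 / 9) * η * S := by
    calc |E| ≤ ∫ x, |Real.exp (g x) - (1 + g x + (g x) ^ 2 / 2)| ∂μ := by
          rw [hEdef]; exact norm_integral_le_integral_norm
            (fun x => Real.exp (g x) - (1 + g x + (g x) ^ 2 / 2)) (μ := μ)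
      _ ≤ ∫ x, (2 / 9) * η * (g x) ^ 2 ∂μ := by
          refine integral_mono hR_int.abs (hg2_int.const_mul _) fun x => ?_
          calc |Real.exp (g x) - (1 + g x + (g x) ^ 2 / 2)| ≤ (2 / 9) * |g x| ^ 3 :=
                exp_taylor3 (hb1 x)
            _ = (2 / 9) * (|g x| * |g x| ^ 2) := by ring
            _ ≤ (2 / 9) * (η * |g x| ^ 2) := by
                have := hb x
                nlinarith [sq_nonneg (|g x|), abs_nonneg (g x)]
            _ = (2 / 9) * η * (g x) ^ 2 := by rw [sq_abs]; ring
      _ = (2 / 9) * η * S := by rw [integral_const_mul, hSdef]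
  set u : ℝ := S / 2 + E with hudef
  clear_value E u
  have hηS : η * S ≤ S := by nlinarith [mul_nonneg (sub_nonneg.2 hη1) hS0]
  have hu0 : 0 ≤ u := by
    have := neg_abs_le E
    rw [hudef]; linarith
  have huS : u ≤ S := by
    have := le_abs_self E
    rw [hudef]; linarith
  have hIu : (∫ x, Real.exp (g x) ∂μ) = 1 + u := by rw [hI_eq, hudef]; ring
  have h1u : (0:ℝ) < 1 + u := by linarith
  -- log bounds
  have hlog_ub : Real.log (1 + u) ≤ u := by
    have := Real.log_le_sub_one_of_pos h1u
    linarith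
  have hlog_lb : u - u ^ 2 ≤ Real.log (1 + u) := by
    have h2 : Real.log ((1 + u)⁻¹) ≤ (1 + u)⁻¹ - 1 :=
      Real.log_le_sub_one_of_pos (inv_pos.2 h1u)
    rw [Real.log_inv] at h2
    have hinv : (1 + u)⁻¹ ≤ 1 - u + u ^ 2 := by
      rw [inv_eq_one_div, div_le_iff₀ h1u]
      nlinarith [pow_nonneg hu0 3]
    linarith
  have hu2 : u ^ 2 ≤ η * S := by
    have h1 : u ^ 2 ≤ S ^ 2 := by nlinarith
    have h2 : S ^ 2 ≤ η ^ 2 * S := by nlinarith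
    have h3 : η ^ 2 * S ≤ η * S := by
      nlinarith [mul_nonneg (mul_nonneg hη0 (sub_nonneg.2 hη1)) hS0]
    linarith
  rw [hIu]
  have habs : |Real.log (1 + u) - u| ≤ u ^ 2 := by
    rw [abs_le]; constructor <;> linarith
  calc |Real.log (1 + u) - 1 / 2 * S| = |(Real.log (1 + u) - u) + E| := by
        rw [hudef]; ring_nf
    _ ≤ |Real.log (1 + u) - u| + |E| := abs_add_le _ _
    _ ≤ u ^ 2 + (2 / 9) * η * S := add_le_add habs hE
    _ ≤ 2 * η * S := by linarith [hu2, mul_nonneg hη0 hS0]
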